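/- Let ι be a type, E : ι → ℝ, W : ι → ℝ, and λ ∈ ℝ. Suppose a family G assigns a real number G(a₁,…,a_N) to every tuple (N ≥ 2) of indices whose values E_{a_i}² are pairwise distinct, such that: (i) G(a,b) = (W_a − W_b)/(2·(E_a² − E_b²)) for all such pairs; (ii) for every N ≥ 3, G(a₁,a₂,…,a_N) = λ·(G(a₁,a₃,…,a_N) − G(a₂,a₃,…,a_N))/(E_{a₁}² − E_{a₂}²). Then for every N ≥ 2 and every such tuple, G(a₁,…,a_N) = (λ^{N−2}/2)·Σ_{k=1}^N W_{a_k}·∏_{l=1, l≠k}^N 1/(E_{a_k}² − E_{a_l}²). -/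

import Mathlib

open Finset in
lemma key_pf {m : Type*} [DecidableEq m] (x w : m → ℝ) (s : Finset m) (p q : m)
    (hp : p ∈ s) (hq : q ∈ s) (hpq : p ≠ q)
    (hx : ∀ i ∈ s, ∀ j ∈ s, i ≠ j → x i ≠ x j) :
    (x p - x q) * ∑ k ∈ s, w k * ∏ l ∈ s.erase k, (x k - x l)⁻¹
      = (∑ k ∈ s.erase q, w k * ∏ l ∈ (s.erase q).erase k, (x k - x l)⁻¹)
        - ∑ k ∈ s.erase p, w k * ∏ l ∈ (s.erase p).erase k, (x k - x l)⁻¹ := by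
  classical
  have hqep : q ∈ s.erase p := Finset.mem_erase.mpr ⟨hpq.symm, hq⟩
  have hpeq : p ∈ s.erase q := Finset.mem_erase.mpr ⟨hpq, hp⟩
  have hqt : q ∉ (s.erase p).erase q := Finset.notMem_erase _ _
  have htt : (s.erase q).erase p = (s.erase p).erase q := Finset.erase_right_comm
  have hpt : p ∉ (s.erase p).erase q := by
    rw [← htt]; exact Finset.notMem_erase _ _
  have hqe : insert q ((s.erase p).erase q) = s.erase p := Finset.insert_erase hqep
  have hpe : insert p ((s.erase p).erase q) = s.erase q := by
    rw [← htt]; exact Finset.insert_erase hpeq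
  have hxpq : x p - x q ≠ 0 := sub_ne_zero.mpr (hx p hp q hq hpq)
  have e1 : ∑ k ∈ s, w k * ∏ l ∈ s.erase k, (x k - x l)⁻¹
      = w p * ∏ l ∈ s.erase p, (x p - x l)⁻¹
        + (w q * ∏ l ∈ s.erase q, (x q - x l)⁻¹
          + ∑ k ∈ (s.erase p).erase q, w k * ∏ l ∈ s.erase k, (x k - x l)⁻¹) := by
    rw [← Finset.add_sum_erase s _ hp, ← Finset.add_sum_erase (s.erase p) _ hqep]
  have e2 : ∑ k ∈ s.erase q, w k * ∏ l ∈ (s.erase q).erase k, (x k - x l)⁻¹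
      = w p * ∏ l ∈ (s.erase q).erase p, (x p - x l)⁻¹
        + ∑ k ∈ (s.erase p).erase q, w k * ∏ l ∈ (s.erase q).erase k, (x k - x l)⁻¹ := by
    rw [← Finset.add_sum_erase (s.erase q) _ hpeq, htt]
  have e3 : ∑ k ∈ s.erase p, w k * ∏ l ∈ (s.erase p).erase k, (x k - x l)⁻¹
      = w q * ∏ l ∈ (s.erase p).erase q, (x q - x l)⁻¹
        + ∑ k ∈ (s.erase p).erase q, w k * ∏ l ∈ (s.erase p).erase k, (x k - x l)⁻¹ := by
    rw [← Finset.add_sum_erase (s.erase p) _ hqep]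
  -- term p
  have htp : (x p - x q) * (w p * ∏ l ∈ s.erase p, (x p - x l)⁻¹)
      = w p * ∏ l ∈ (s.erase q).erase p, (x p - x l)⁻¹ := by
    rw [← hqe, Finset.prod_insert hqt, htt]
    have hc : (x p - x q) * (x p - x q)⁻¹ = 1 := mul_inv_cancel₀ hxpq
    linear_combination (w p * ∏ l ∈ (s.erase p).erase q, (x p - x l)⁻¹) * hc
  -- term q
  have htq : (x p - x q) * (w q * ∏ l ∈ s.erase q, (x q - x l)⁻¹)
      = - (w q * ∏ l ∈ (s.erase p).erase q, (x q - x l)⁻¹) := by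
    rw [← hpe, Finset.prod_insert hpt]
    have hqp : x q - x p ≠ 0 := sub_ne_zero.mpr (hx q hq p hp hpq.symm)
    have hc : (x q - x p) * (x q - x p)⁻¹ = 1 := mul_inv_cancel₀ hqp
    linear_combination (-(w q * ∏ l ∈ (s.erase p).erase q, (x q - x l)⁻¹)) * hc
  -- middle terms
  have hsum : (x p - x q) * ∑ k ∈ (s.erase p).erase q, w k * ∏ l ∈ s.erase k, (x k - x l)⁻¹
      = (∑ k ∈ (s.erase p).erase q, w k * ∏ l ∈ (s.erase q).erase k, (x k - x l)⁻¹)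
        - ∑ k ∈ (s.erase p).erase q, w k * ∏ l ∈ (s.erase p).erase k, (x k - x l)⁻¹ := by
    rw [Finset.mul_sum, ← Finset.sum_sub_distrib]
    refine Finset.sum_congr rfl fun k hk => ?_
    have hkq : k ≠ q := (Finset.mem_erase.mp hk).1
    have hkp : k ≠ p := (Finset.mem_erase.mp (Finset.mem_erase.mp hk).2).1
    have hks : k ∈ s := Finset.mem_of_mem_erase (Finset.mem_of_mem_erase hk)
    have h1 : s.erase k = insert p (insert q (((s.erase p).erase q).erase k)) := by
      ext j
      simp only [Finset.mem_erase, Finset.mem_insert]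
      constructor
      · rintro ⟨hjk, hjs⟩
        by_cases hjp : j = p
        · exact Or.inl hjp
        · by_cases hjq : j = q
          · exact Or.inr (Or.inl hjq)
          · exact Or.inr (Or.inr ⟨hjk, hjq, hjp, hjs⟩)
      · rintro (rfl | rfl | ⟨hjk, hjq, hjp, hjs⟩)
        · exact ⟨Ne.symm hkp, hp⟩
        · exact ⟨Ne.symm hkq, hq⟩
        · exact ⟨hjk, hjs⟩
    have h2 : (s.erase q).erase k = insert p (((s.erase p).erase q).erase k) := by
      rw [← htt, Finset.erase_right_comm (s := s.erase q) (a := p) (b := k),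
        Finset.insert_erase (Finset.mem_erase.mpr ⟨Ne.symm hkp, hpeq⟩)]
    have h3 : (s.erase p).erase k = insert q (((s.erase p).erase q).erase k) := by
      rw [Finset.erase_right_comm (s := s.erase p) (a := q) (b := k),
        Finset.insert_erase (Finset.mem_erase.mpr ⟨Ne.symm hkq, hqep⟩)]
    have hpmem : p ∉ insert q (((s.erase p).erase q).erase k) := by
      simp only [Finset.mem_insert, not_or]
      exact ⟨hpq, fun h => hpt (Finset.mem_of_mem_erase h)⟩
    have hqmem : q ∉ ((s.erase p).erase q).erase k := fun h => hqt (Finset.mem_of_mem_erase h)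
    have hpmem' : p ∉ ((s.erase p).erase q).erase k := fun h => hpt (Finset.mem_of_mem_erase h)
    rw [h1, h2, h3, Finset.prod_insert hpmem, Finset.prod_insert hqmem,
      Finset.prod_insert hpmem']
    have hkpne : x k - x p ≠ 0 := sub_ne_zero.mpr (hx k hks p hp hkp)
    have hkqne : x k - x q ≠ 0 := sub_ne_zero.mpr (hx k hks q hq hkq)
    have hid : (x p - x q) * ((x k - x p)⁻¹ * (x k - x q)⁻¹)
        = (x k - x p)⁻¹ - (x k - x q)⁻¹ := by
      field_simp
      ring
    linear_combination (w k * ∏ l ∈ ((s.erase p).erase q).erase k, (x k - x l)⁻¹) * hid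
  rw [e1, e2, e3]
  linear_combination htp + htq + hsum

open Finset in
lemma reindex_pf {ι : Type*} (E W : ι → ℝ) {m : ℕ} (a : Fin (m + 1) → ι) (p : Fin (m + 1)) :
    ∑ k : Fin m, W (a (p.succAbove k)) *
        ∏ l ∈ Finset.univ.erase k, (E (a (p.succAbove k)) ^ 2 - E (a (p.succAbove l)) ^ 2)⁻¹
      = ∑ j ∈ Finset.univ.erase p, W (a j) *
          ∏ l ∈ (Finset.univ.erase p).erase j, (E (a j) ^ 2 - E (a l) ^ 2)⁻¹ := by
  have hinj : Function.Injective p.succAbove := Fin.succAbove_right_injective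
  have himg : Finset.image p.succAbove Finset.univ = Finset.univ.erase p := by
    ext j
    simp [Fin.exists_succAbove_eq_iff]
  rw [← himg, Finset.sum_image fun b _ c _ h => hinj h]
  refine Finset.sum_congr rfl fun k _ => ?_
  congr 1
  rw [← Finset.image_erase hinj, Finset.prod_image fun b _ c _ h => hinj h]

/-- Schwinger–Dyson recursion for the connected `N`-point functions (single boundary):
if `G(a,b) = (W_a − W_b)/(2(E_a²−E_b²))` and
`G(a₁,…,a_N) = λ(G(a₁,a₃,…,a_N) − G(a₂,…,a_N))/(E_{a₁}²−E_{a₂}²)` for `N ≥ 3`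
(on tuples with pairwise distinct `E²`-values), then
`G(a₁,…,a_N) = (λ^{N−2}/2)·Σ_k W_{a_k}·∏_{l≠k} 1/(E_{a_k}²−E_{a_l}²)`. -/
theorem stmt_5 {ι : Type*} (E W : ι → ℝ) (lam : ℝ)
    (G : (N : ℕ) → (Fin N → ι) → ℝ)
    (h2 : ∀ a : Fin 2 → ι, (∀ i j, i ≠ j → E (a i) ^ 2 ≠ E (a j) ^ 2) →
      G 2 a = (W (a 0) - W (a 1)) / (2 * (E (a 0) ^ 2 - E (a 1) ^ 2)))
    (hrec : ∀ (n : ℕ) (a : Fin (n + 3) → ι),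
      (∀ i j, i ≠ j → E (a i) ^ 2 ≠ E (a j) ^ 2) →
      G (n + 3) a = lam * (G (n + 2) (a ∘ (1 : Fin (n + 3)).succAbove)
          - G (n + 2) (a ∘ Fin.succ)) / (E (a 0) ^ 2 - E (a 1) ^ 2)) :
    ∀ (n : ℕ) (a : Fin (n + 2) → ι),
      (∀ i j, i ≠ j → E (a i) ^ 2 ≠ E (a j) ^ 2) →
      G (n + 2) a = lam ^ n / 2 *
        ∑ k : Fin (n + 2), W (a k) *
          ∏ l ∈ Finset.univ.erase k, (E (a k) ^ 2 - E (a l) ^ 2)⁻¹ := by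
  intro n
  induction n with
  | zero =>
    intro a hdist
    have h01 : E (a 0) ^ 2 ≠ E (a 1) ^ 2 := hdist 0 1 (by decide)
    rw [h2 a hdist]
    rw [Fin.sum_univ_two,
      show Finset.univ.erase (0 : Fin 2) = {1} from by decide,
      show Finset.univ.erase (1 : Fin 2) = {0} from by decide,
      Finset.prod_singleton, Finset.prod_singleton]
    have h1 : E (a 0) ^ 2 - E (a 1) ^ 2 ≠ 0 := sub_ne_zero.mpr h01
    have h2' : E (a 1) ^ 2 - E (a 0) ^ 2 ≠ 0 := sub_ne_zero.mpr (Ne.symm h01)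
    field_simp
    ring
  | succ n ih =>
    intro a hdist
    have hd1 : ∀ i j, i ≠ j →
        E ((a ∘ (1 : Fin (n + 3)).succAbove) i) ^ 2 ≠ E ((a ∘ (1 : Fin (n + 3)).succAbove) j) ^ 2 :=
      fun i j hij => hdist _ _ fun h => hij (Fin.succAbove_right_injective h)
    have hd0 : ∀ i j, i ≠ j →
        E ((a ∘ Fin.succ) i) ^ 2 ≠ E ((a ∘ Fin.succ) j) ^ 2 :=
      fun i j hij => hdist _ _ fun h => hij (Fin.succ_injective _ h)
    rw [hrec n a hdist, ih _ hd1, ih _ hd0]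
    simp only [Function.comp_apply]
    have hsucc : ∀ k : Fin (n + 2), Fin.succ k = (0 : Fin (n + 3)).succAbove k := by
      intro k; rw [Fin.succAbove_zero]
    simp only [hsucc]
    rw [reindex_pf E W a 1, reindex_pf E W a 0]
    have hkey := key_pf (fun i => E (a i) ^ 2) (fun i => W (a i)) Finset.univ 0 1
      (Finset.mem_univ _) (Finset.mem_univ _) Fin.zero_ne_one
      (fun i _ j _ hij => hdist i j hij)
    have hne : E (a 0) ^ 2 - E (a 1) ^ 2 ≠ 0 := sub_ne_zero.mpr (hdist 0 1 Fin.zero_ne_one)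
    beta_reduce at hkey
    rw [div_eq_iff hne]
    rw [pow_succ]
    linear_combination (-(lam ^ n * lam / 2)) * hkey
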